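/- arXiv:2401.12058 — 4 statements merged into one kernel-verified Lean document; each statement's English description precedes it below -/
import Mathlib

section
/- Let G, ζ₁, ζ₂, ζ₃ > 0 with ζ₁ > max(ζ₂, ζ₃), let a₁, ..., a_l ∈ ℝ^d with ‖a_r‖ ≤ G for all r, and define h(x) = max(ζ₃, max_{1≤r≤l} ⟨a_r, x⟩). Suppose x₀ and index r₀ satisfy ⟨a_{r₀}, x₀⟩ = ζ₁ and max_{r ≠ r₀} ⟨a_r, x₀⟩ ≤ ζ₂. Then for any 0 < δ < (ζ₁ − max(ζ₂, ζ₃))/(2G), the smoothed function h̃(x) = E_{v~Unif(B)}[h(x + δv)] satisfies h̃(x₀) = ⟨a_{r₀}, x₀⟩ and ∇h̃(x₀) = a_{r₀}. -/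
open MeasureTheory RealInnerProductSpace

/-- Smoothing in a region where a piecewise-max function is affine: let
`h(x) = max(ζ₃, max_r ⟨a_r, x⟩)` with `‖a_r‖ ≤ G`, and suppose `⟨a_{r₀}, x₀⟩ = ζ₁`,
`⟨a_r, x₀⟩ ≤ ζ₂` for `r ≠ r₀`, where `ζ₁ > max(ζ₂, ζ₃) > 0`.  Then for
`0 < δ < (ζ₁ - max(ζ₂, ζ₃))/(2G)`, the randomized smoothing
`h̃(x) = E_{v ~ Unif(B)}[h(x + δv)]` satisfies `h̃(x₀) = ⟨a_{r₀}, x₀⟩` and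
`∇h̃(x₀) = a_{r₀}`. -/
theorem smoothing_linear_region (d l : ℕ) (hd : 1 ≤ d)
    (G ζ₁ ζ₂ ζ₃ δ : ℝ) (hG : 0 < G) (hζ₁ : 0 < ζ₁) (hζ₂ : 0 < ζ₂) (hζ₃ : 0 < ζ₃)
    (hζ : max ζ₂ ζ₃ < ζ₁)
    (hδ0 : 0 < δ) (hδ : δ < (ζ₁ - max ζ₂ ζ₃) / (2 * G))
    (a : Fin l → EuclideanSpace ℝ (Fin d)) (ha : ∀ r, ‖a r‖ ≤ G)
    (x₀ : EuclideanSpace ℝ (Fin d)) (r₀ : Fin l)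
    (hr₀ : ⟪a r₀, x₀⟫ = ζ₁) (hother : ∀ r, r ≠ r₀ → ⟪a r, x₀⟫ ≤ ζ₂) :
    (∫ v, max ζ₃ (⨆ r, ⟪a r, x₀ + δ • v⟫)
        ∂((volume (Metric.ball (0 : EuclideanSpace ℝ (Fin d)) 1))⁻¹ •
            volume.restrict (Metric.ball (0 : EuclideanSpace ℝ (Fin d)) 1)))
      = ⟪a r₀, x₀⟫ ∧
    gradient
      (fun x => ∫ v, max ζ₃ (⨆ r, ⟪a r, x + δ • v⟫)
        ∂((volume (Metric.ball (0 : EuclideanSpace ℝ (Fin d)) 1))⁻¹ •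
            volume.restrict (Metric.ball (0 : EuclideanSpace ℝ (Fin d)) 1))) x₀
      = a r₀ := by
  have hl : Nonempty (Fin l) := ⟨r₀⟩
  set B : Set (EuclideanSpace ℝ (Fin d)) := Metric.ball 0 1 with hBdef
  have hmeas : MeasurableSet B := measurableSet_ball
  set M := max ζ₂ ζ₃ with hMdef
  set ε := (ζ₁ - M) / (2 * G) - δ with hεdef
  clear_value M
  clear_value ε
  have hεpos : 0 < ε := by rw [hεdef]; exact sub_pos.mpr hδ
  have hGε : G * ε + δ * G = (ζ₁ - M) / 2 := by
    rw [hεdef]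
    field_simp
    ring
  -- key pointwise identity
  have key : ∀ x ∈ Metric.ball x₀ ε, ∀ v ∈ B,
      max ζ₃ (⨆ r, ⟪a r, x + δ • v⟫) = ⟪a r₀, x + δ • v⟫ := by
    intro x hx v hv
    have hxd : ‖x - x₀‖ < ε := by rwa [← dist_eq_norm, ← Metric.mem_ball]
    have hvn : ‖v‖ ≤ 1 := by
      have := Metric.mem_ball.mp hv
      rw [dist_zero_right] at this
      exact this.le
    have bound : ∀ r : Fin l, |⟪a r, x + δ • v⟫ - ⟪a r, x₀⟫| ≤ G * ε + δ * G := by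
      intro r
      have hsplit : ⟪a r, x + δ • v⟫ - ⟪a r, x₀⟫ = ⟪a r, x - x₀⟫ + δ * ⟪a r, v⟫ := by
        rw [inner_sub_right, inner_add_right, real_inner_smul_right]
        ring
      rw [hsplit]
      have h1 : |⟪a r, x - x₀⟫| ≤ G * ε :=
        (abs_real_inner_le_norm _ _).trans
          (mul_le_mul (ha r) hxd.le (norm_nonneg _) hG.le)
      have h2 : |⟪a r, v⟫| ≤ G := by
        calc |⟪a r, v⟫| ≤ ‖a r‖ * ‖v‖ := abs_real_inner_le_norm _ _
        _ ≤ G * 1 := mul_le_mul (ha r) hvn (norm_nonneg _) hG.le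
        _ = G := mul_one G
      calc |⟪a r, x - x₀⟫ + δ * ⟪a r, v⟫| ≤ |⟪a r, x - x₀⟫| + |δ * ⟪a r, v⟫| := abs_add_le _ _
      _ ≤ G * ε + δ * G := by
          rw [abs_mul, abs_of_pos hδ0]
          exact add_le_add h1 (mul_le_mul_of_nonneg_left h2 hδ0.le)
    have hr₀lb : (ζ₁ + M) / 2 ≤ ⟪a r₀, x + δ • v⟫ := by
      have h := (abs_le.mp (bound r₀)).1
      rw [hr₀] at h
      linarith
    have hle : ∀ r : Fin l, ⟪a r, x + δ • v⟫ ≤ ⟪a r₀, x + δ • v⟫ := by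
      intro r
      by_cases hr : r = r₀
      · rw [hr]
      · have h := (abs_le.mp (bound r)).2
        have h2 : ⟪a r, x₀⟫ ≤ ζ₂ := hother r hr
        have h3 : ζ₂ ≤ M := by rw [hMdef]; exact le_max_left _ _
        linarith
    have hsup : (⨆ r, ⟪a r, x + δ • v⟫) = ⟪a r₀, x + δ • v⟫ :=
      le_antisymm (ciSup_le hle) (le_ciSup (f := fun r => ⟪a r, x + δ • v⟫) (Set.Finite.bddAbove (Set.finite_range _)) r₀)
    rw [hsup, max_eq_right]
    have h3 : ζ₃ ≤ M := by rw [hMdef]; exact le_max_right _ _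
    linarith
  -- basic measure facts
  have hvol0 : (volume B).toReal ≠ 0 :=
    ENNReal.toReal_ne_zero.mpr
      ⟨(Metric.measure_ball_pos volume 0 one_pos).ne', measure_ball_lt_top.ne⟩
  -- integrability facts
  have hidint : IntegrableOn (fun v : EuclideanSpace ℝ (Fin d) => v) B volume :=
    (continuous_id.continuousOn.integrableOn_compact (isCompact_closedBall 0 1)).mono_set
      Metric.ball_subset_closedBall
  have hinnerint : IntegrableOn (fun v : EuclideanSpace ℝ (Fin d) => ⟪a r₀, v⟫) B volume := by
    have := (innerSL ℝ (a r₀)).integrable_comp hidint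
    simpa [IntegrableOn] using this
  -- ∫ v in B, v = 0
  have hid0 : ∫ v in B, (v : EuclideanSpace ℝ (Fin d)) = 0 := by
    set f : EuclideanSpace ℝ (Fin d) → EuclideanSpace ℝ (Fin d) := B.indicator (fun w => w) with hf
    have hpres : ∫ v, f (-v) = ∫ v, f v :=
      (Measure.measurePreserving_neg volume).integral_comp
        (MeasurableEquiv.neg (EuclideanSpace ℝ (Fin d))).measurableEmbedding _
    have hind : ∀ v, f (-v) = - f v := by
      intro v
      by_cases h : v ∈ B
      · have h' : -v ∈ B := by
          simp only [hBdef, Metric.mem_ball, dist_zero_right] at h ⊢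
          simpa using h
        simp [hf, Set.indicator_of_mem h, Set.indicator_of_mem h']
      · have h' : -v ∉ B := by
          simp only [hBdef, Metric.mem_ball, dist_zero_right] at h ⊢
          simpa using h
        simp [hf, Set.indicator_of_notMem h, Set.indicator_of_notMem h']
    have h2 : ∫ v, f v = - ∫ v, f v := by
      calc ∫ v, f v = ∫ v, f (-v) := hpres.symm
      _ = ∫ v, -(f v) := by simp_rw [hind]
      _ = - ∫ v, f v := integral_neg f
    have h0 : ∫ v, f v = 0 := by
      have h3 : (∫ v, f v) + (∫ v, f v) = 0 := by nth_rewrite 1 [h2]; simp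
      have h4 : (2 : ℝ) • (∫ v, f v) = 0 := by rw [two_smul]; exact h3
      simpa using (smul_eq_zero.mp h4).resolve_left (by norm_num)
    rw [← integral_indicator hmeas]
    exact h0
  have hinner0 : ∫ v in B, ⟪a r₀, v⟫ = 0 := by
    have := (innerSL ℝ (a r₀)).integral_comp_comm hidint
    simpa [hid0] using this
  -- the smoothed function is linear on the ball around x₀
  have hF : ∀ x ∈ Metric.ball x₀ ε,
      (∫ v, max ζ₃ (⨆ r, ⟪a r, x + δ • v⟫)
        ∂((volume B)⁻¹ • volume.restrict B)) = ⟪a r₀, x⟫ := by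
    intro x hx
    rw [integral_smul_measure]
    have e1 : ∫ v in B, max ζ₃ (⨆ r, ⟪a r, x + δ • v⟫) = ∫ v in B, ⟪a r₀, x + δ • v⟫ :=
      setIntegral_congr_fun hmeas (fun v hv => key x hx v hv)
    rw [e1]
    have e2 : ∀ v : EuclideanSpace ℝ (Fin d),
        ⟪a r₀, x + δ • v⟫ = ⟪a r₀, x⟫ + δ * ⟪a r₀, v⟫ := fun v => by
      rw [inner_add_right, real_inner_smul_right]
    simp_rw [e2]
    rw [integral_add (integrableOn_const (C := ⟪a r₀, x⟫) (s := B) (μ := volume) measure_ball_lt_top.ne)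
      (hinnerint.const_mul δ), integral_const_mul, hinner0, setIntegral_const,
      mul_zero, add_zero, ENNReal.toReal_inv, smul_eq_mul, smul_eq_mul]
    field_simp
    rfl
  refine ⟨hF x₀ (Metric.mem_ball_self hεpos), ?_⟩
  have hL : HasGradientAt (fun x : EuclideanSpace ℝ (Fin d) => ⟪a r₀, x⟫) (a r₀) x₀ := by
    rw [hasGradientAt_iff_hasFDerivAt]
    have hfun : (fun x : EuclideanSpace ℝ (Fin d) => ⟪a r₀, x⟫)
        = ⇑(InnerProductSpace.toDual ℝ (EuclideanSpace ℝ (Fin d)) (a r₀)) := by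
      funext x
      simp [InnerProductSpace.toDual_apply_apply]
    rw [hfun]
    exact (InnerProductSpace.toDual ℝ (EuclideanSpace ℝ (Fin d)) (a r₀)).hasFDerivAt
  have hEq : (fun x => ∫ v, max ζ₃ (⨆ r, ⟪a r, x + δ • v⟫)
        ∂((volume B)⁻¹ • volume.restrict B)) =ᶠ[nhds x₀]
      fun x : EuclideanSpace ℝ (Fin d) => ⟪a r₀, x⟫ := by
    filter_upwards [Metric.ball_mem_nhds x₀ hεpos] with x hx using hF x hx
  have hmain : HasGradientAt (fun x => ∫ v, max ζ₃ (⨆ r, ⟪a r, x + δ • v⟫)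
        ∂((volume B)⁻¹ • volume.restrict B)) (a r₀) x₀ := by
    rw [hasGradientAt_iff_hasFDerivAt] at hL ⊢
    exact hL.congr_of_eventuallyEq hEq
  exact hmain.gradient
end

section
/- Let n ≥ 2048 and δ = 1/(4n²). Let U be a finite set with |U| ≥ n^{4n}, and let V₁, ..., V_n be i.i.d. random subsets of U where each element is included in each V_i independently with probability δ. For t ∈ [n], let P_t = ∩_{i<t} V_i and S_t = ∩_{i≥t} (U \ V_i), and when P_t ≠ ∅ let J_t be the element of P_t of minimal index (under a fixed enumeration of U). Then Pr(for all t ≤ n: P_t ≠ ∅ and J_t ∈ S_t) ≥ 1 − n(1 − δ^n)^{|U|} − n(1 − (1−δ)^n) ≥ 1/2. -/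
open MeasureTheory ProbabilityTheory

namespace SGDAux

lemma sgd_numeric (n N : ℕ) (hn : 2048 ≤ n) (hN : n ^ (4 * n) ≤ N) :
    (1 : ℝ) / 2 ≤ 1 - n * (1 - (1 / (4 * (n : ℝ) ^ 2)) ^ n) ^ N
        - n * (1 - (1 - 1 / (4 * (n : ℝ) ^ 2)) ^ n) := by
  have hn2 : (2048:ℝ) ≤ n := by exact_mod_cast hn
  have hn0 : (0:ℝ) < n := by linarith
  set d : ℝ := 1 / (4 * (n : ℝ) ^ 2) with hd
  have hd0 : 0 < d := by positivity
  have hd1 : d ≤ 1 := by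
    rw [hd, div_le_one (by positivity)]; nlinarith
  have hb : (n:ℝ) * (1 - (1 - d) ^ n) ≤ 1 / 4 := by
    have hber : 1 + (n:ℝ) * (-d) ≤ (1 + (-d)) ^ n := one_add_mul_le_pow (by linarith) n
    have : 1 - (1 - d) ^ n ≤ n * d := by
      have : (1:ℝ) - n * d ≤ (1 - d) ^ n := by
        simpa [sub_eq_add_neg, mul_neg] using hber
      linarith
    have h2 : (n:ℝ) * (1 - (1 - d) ^ n) ≤ n * (n * d) :=
      mul_le_mul_of_nonneg_left this (by positivity)
    have h3 : (n:ℝ) * (n * d) = 1 / 4 := by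
      rw [hd]; field_simp
    linarith
  have ha : (n:ℝ) * (1 - d ^ n) ^ N ≤ 1 / 4 := by
    set x : ℝ := d ^ n with hx
    have hx0 : 0 < x := by positivity
    have hx1 : x ≤ 1 := pow_le_one₀ hd0.le hd1
    have hNx : 4 * (n:ℝ) ≤ N * x := by
      have hNn : ((n:ℝ)) ^ (4 * n) ≤ N := by exact_mod_cast hN
      have hxval : x = 1 / (4 * (n:ℝ) ^ 2) ^ n := by
        rw [hx, hd, div_pow, one_pow]
      have key : 4 * (n:ℝ) * (4 * (n:ℝ) ^ 2) ^ n ≤ (n:ℝ) ^ (4 * n) := by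
        have h1 : 4 * (n:ℝ) ≤ (n:ℝ) ^ 2 := by nlinarith
        have h2 : (4 * (n:ℝ) ^ 2) ^ n = 4 ^ n * ((n:ℝ) ^ 2) ^ n := by
          rw [mul_pow]
        have h3 : (4:ℝ) ^ n ≤ (n:ℝ) ^ n := pow_le_pow_left₀ (by norm_num) (by linarith) n
        have h4 : 4 * (n:ℝ) * (4 * (n:ℝ) ^ 2) ^ n ≤ (n:ℝ) ^ 2 * ((n:ℝ) ^ n * ((n:ℝ) ^ 2) ^ n) := by
          rw [h2]
          have h3' : (4:ℝ) ^ n * ((n:ℝ) ^ 2) ^ n ≤ (n:ℝ) ^ n * ((n:ℝ) ^ 2) ^ n :=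
            mul_le_mul_of_nonneg_right h3 (by positivity)
          calc 4 * (n:ℝ) * (4 ^ n * ((n:ℝ) ^ 2) ^ n)
              ≤ (n:ℝ) ^ 2 * (4 ^ n * ((n:ℝ) ^ 2) ^ n) :=
                mul_le_mul_of_nonneg_right h1 (by positivity)
            _ ≤ (n:ℝ) ^ 2 * ((n:ℝ) ^ n * ((n:ℝ) ^ 2) ^ n) :=
                mul_le_mul_of_nonneg_left h3' (by positivity)
        have h5 : (n:ℝ) ^ 2 * ((n:ℝ) ^ n * ((n:ℝ) ^ 2) ^ n) = (n:ℝ) ^ (2 + n + 2 * n) := by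
          rw [← pow_mul, ← pow_add, ← pow_add]; ring_nf
        have h6 : (n:ℝ) ^ (2 + n + 2 * n) ≤ (n:ℝ) ^ (4 * n) :=
          pow_le_pow_right₀ (by linarith) (by omega)
        linarith
      calc 4 * (n:ℝ) = 4 * (n:ℝ) * (4 * (n:ℝ) ^ 2) ^ n / (4 * (n:ℝ) ^ 2) ^ n := by
            field_simp
        _ ≤ (n:ℝ) ^ (4 * n) / (4 * (n:ℝ) ^ 2) ^ n := by
            apply div_le_div_of_nonneg_right key (by positivity) |>.trans_eq rfl
        _ ≤ N / (4 * (n:ℝ) ^ 2) ^ n := by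
            apply div_le_div_of_nonneg_right hNn (by positivity) |>.trans_eq rfl
        _ = N * x := by rw [hxval]; field_simp
    have hNx0 : (0:ℝ) < N * x := by linarith
    have hpow : (1 - x) ^ N ≤ 1 / (N * x) := by
      have hber : 1 + (N:ℝ) * x ≤ (1 + x) ^ N := one_add_mul_le_pow (by linarith) N
      have hmul : (1 + (N:ℝ) * x) * (1 - x) ^ N ≤ 1 := by
        have h1 : (1 + (N:ℝ) * x) * (1 - x) ^ N ≤ (1 + x) ^ N * (1 - x) ^ N :=
          mul_le_mul_of_nonneg_right hber (pow_nonneg (by linarith) N)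
        have h2 : (1 + x) ^ N * (1 - x) ^ N = (1 - x ^ 2) ^ N := by
          rw [← mul_pow]; ring_nf
        have h3 : (1 - x ^ 2) ^ N ≤ 1 :=
          pow_le_one₀ (by nlinarith) (by nlinarith)
        linarith
      rw [le_div_iff₀ hNx0]
      calc (1 - x) ^ N * (N * x) ≤ (1 - x) ^ N * (1 + N * x) := by
            exact mul_le_mul_of_nonneg_left (by linarith) (pow_nonneg (by linarith) N)
        _ ≤ 1 := by linarith [hmul]
    calc (n:ℝ) * (1 - x) ^ N ≤ n * (1 / (N * x)) :=
          mul_le_mul_of_nonneg_left hpow (by positivity)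
      _ ≤ n * (1 / (4 * n)) := by
          apply mul_le_mul_of_nonneg_left _ (by positivity)
          apply div_le_div_of_nonneg_left (by norm_num) (by positivity) hNx
      _ = 1 / 4 := by field_simp
  linarith

variable {n N : ℕ} {Ω : Type*} [MeasurableSpace Ω] {μ : Measure Ω}
  {χ : (Fin N × Fin n) → Ω → Bool}

lemma measSet_all {α : Type*} [MeasurableSpace α] [MeasurableSingletonClass α] [Finite α]
    (s : Set α) : MeasurableSet s := s.toFinite.measurableSet

lemma meas_ev (hmeas : ∀ p, Measurable (χ p)) (Q : ((Fin N × Fin n) → Bool) → Prop) :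
    MeasurableSet {ω | Q (fun p => χ p ω)} :=
  (measurable_pi_lambda _ hmeas) (measSet_all {g | Q g})

lemma indep_group_mul (hindep : iIndepFun χ μ)
    (hmeas : ∀ p, Measurable (χ p))
    (S T : Finset (Fin N × Fin n)) (hST : Disjoint S T)
    (A : Set ((p : S) → Bool)) (B : Set ((p : T) → Bool)) :
    μ ((fun ω (p : S) => χ p ω) ⁻¹' A ∩ (fun ω (p : T) => χ p ω) ⁻¹' B)
      = μ ((fun ω (p : S) => χ p ω) ⁻¹' A) * μ ((fun ω (p : T) => χ p ω) ⁻¹' B) :=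
  (hindep.indepFun_finset S T hST hmeas).measure_inter_preimage_eq_mul
    A B (measSet_all A) (measSet_all B)

lemma prod_coords (hindep : iIndepFun χ μ)
    (S : Finset (Fin N × Fin n)) (b : Bool) :
    μ (⋂ p ∈ S, {ω | χ p ω = b}) = ∏ p ∈ S, μ {ω | χ p ω = b} :=
  hindep.measure_inter_preimage_eq_mul (sets := fun _ => {x | x = b}) S
    (fun _ _ => measSet_all _)

lemma dist_false [IsProbabilityMeasure μ] (hmeas : ∀ p, Measurable (χ p))
    (hdist : ∀ p, μ {ω | χ p ω = true} = ENNReal.ofReal (1 / (4 * (n : ℝ) ^ 2))) (p) :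
    μ {ω | χ p ω = false} = 1 - ENNReal.ofReal (1 / (4 * (n : ℝ) ^ 2)) := by
  have h : {ω | χ p ω = false} = {ω | χ p ω = true}ᶜ := by
    ext ω; simp
  rw [h, prob_compl_eq_one_sub (meas_ev hmeas (fun g => g p = true)), hdist]

lemma card_le_n (F : Finset (Fin N × Fin n)) (u : Fin N) (hF : ∀ p ∈ F, p.1 = u) :
    F.card ≤ n := by
  calc F.card ≤ (Finset.univ : Finset (Fin n)).card := by
        apply Finset.card_le_card_of_injOn Prod.snd (fun p _ => Finset.mem_univ _)
        intro p hp q hq hpq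
        exact Prod.ext (by rw [hF p hp, hF q hq]) hpq
    _ = n := by simp

lemma delta_le_one : (1 : ℝ) / (4 * (n : ℝ) ^ 2) ≤ 1 := by
  rcases Nat.eq_zero_or_pos n with h | h
  · subst h; norm_num
  · have h1 : (1:ℝ) ≤ n := by exact_mod_cast h
    rw [div_le_one (by nlinarith)]; nlinarith

lemma delta_nonneg : (0 : ℝ) ≤ 1 / (4 * (n : ℝ) ^ 2) := by positivity

lemma Au_le [IsProbabilityMeasure μ] (hindep : iIndepFun χ μ)
    (hmeas : ∀ p, Measurable (χ p))
    (hdist : ∀ p, μ {ω | χ p ω = true} = ENNReal.ofReal (1 / (4 * (n : ℝ) ^ 2)))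
    (t : Fin n) (u : Fin N) :
    μ {ω | ∃ i : Fin n, i.val < t.val ∧ χ (u, i) ω = false}
      ≤ 1 - (ENNReal.ofReal (1 / (4 * (n : ℝ) ^ 2))) ^ n := by
  set d := ENNReal.ofReal (1 / (4 * (n : ℝ) ^ 2)) with hd
  have hcompl : {ω | ∃ i : Fin n, i.val < t.val ∧ χ (u, i) ω = false}
      = {ω | ∀ i : Fin n, i.val < t.val → χ (u, i) ω = true}ᶜ := by
    ext ω
    simp only [Set.mem_setOf_eq, Set.mem_compl_iff, not_forall, Bool.not_eq_true]
    constructor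
    · rintro ⟨i, hi, h⟩; exact ⟨i, hi, h⟩
    · rintro ⟨i, hi, h⟩; exact ⟨i, hi, h⟩
  rw [hcompl, prob_compl_eq_one_sub
    (meas_ev hmeas (fun g => ∀ i : Fin n, i.val < t.val → g (u, i) = true))]
  have hinter : {ω | ∀ i : Fin n, i.val < t.val → χ (u, i) ω = true}
      = ⋂ p ∈ Finset.univ.filter (fun p : Fin N × Fin n => p.1 = u ∧ p.2.val < t.val),
          {ω | χ p ω = true} := by
    ext ω
    simp only [Set.mem_setOf_eq, Set.mem_iInter, Finset.mem_filter, Finset.mem_univ, true_and]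
    constructor
    · rintro h ⟨v, i⟩ ⟨rfl, hi⟩; exact h i hi
    · intro h i hi; exact h (u, i) ⟨rfl, hi⟩
  rw [hinter, prod_coords hindep _ true]
  have hval : ∏ p ∈ Finset.univ.filter (fun p : Fin N × Fin n => p.1 = u ∧ p.2.val < t.val),
      μ {ω | χ p ω = true}
      = d ^ (Finset.univ.filter (fun p : Fin N × Fin n => p.1 = u ∧ p.2.val < t.val)).card := by
    rw [Finset.prod_congr rfl (fun p _ => hdist p), Finset.prod_const]
  rw [hval]
  have hcard := card_le_n (Finset.univ.filter (fun p : Fin N × Fin n => p.1 = u ∧ p.2.val < t.val))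
    u (fun p hp => (Finset.mem_filter.1 hp).2.1)
  have hd1 : d ≤ 1 := by rw [hd]; exact ENNReal.ofReal_le_one.2 delta_le_one
  exact tsub_le_tsub_left (pow_le_pow_right_of_le_one' hd1 hcard) 1

lemma Eu_le [IsProbabilityMeasure μ] (hindep : iIndepFun χ μ)
    (hmeas : ∀ p, Measurable (χ p))
    (hdist : ∀ p, μ {ω | χ p ω = true} = ENNReal.ofReal (1 / (4 * (n : ℝ) ^ 2)))
    (t : Fin n) (u : Fin N) :
    μ {ω | ∃ i : Fin n, t.val ≤ i.val ∧ χ (u, i) ω = true}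
      ≤ 1 - (1 - ENNReal.ofReal (1 / (4 * (n : ℝ) ^ 2))) ^ n := by
  set d := ENNReal.ofReal (1 / (4 * (n : ℝ) ^ 2)) with hd
  have hcompl : {ω | ∃ i : Fin n, t.val ≤ i.val ∧ χ (u, i) ω = true}
      = {ω | ∀ i : Fin n, t.val ≤ i.val → χ (u, i) ω = false}ᶜ := by
    ext ω
    simp only [Set.mem_setOf_eq, Set.mem_compl_iff, not_forall, Bool.not_eq_false]
    constructor
    · rintro ⟨i, hi, h⟩; exact ⟨i, hi, h⟩
    · rintro ⟨i, hi, h⟩; exact ⟨i, hi, h⟩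
  rw [hcompl, prob_compl_eq_one_sub
    (meas_ev hmeas (fun g => ∀ i : Fin n, t.val ≤ i.val → g (u, i) = false))]
  have hinter : {ω | ∀ i : Fin n, t.val ≤ i.val → χ (u, i) ω = false}
      = ⋂ p ∈ Finset.univ.filter (fun p : Fin N × Fin n => p.1 = u ∧ t.val ≤ p.2.val),
          {ω | χ p ω = false} := by
    ext ω
    simp only [Set.mem_setOf_eq, Set.mem_iInter, Finset.mem_filter, Finset.mem_univ, true_and]
    constructor
    · rintro h ⟨v, i⟩ ⟨rfl, hi⟩; exact h i hi
    · intro h i hi; exact h (u, i) ⟨rfl, hi⟩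
  rw [hinter, prod_coords hindep _ false]
  have hval : ∏ p ∈ Finset.univ.filter (fun p : Fin N × Fin n => p.1 = u ∧ t.val ≤ p.2.val),
      μ {ω | χ p ω = false}
      = (1 - d) ^ (Finset.univ.filter
          (fun p : Fin N × Fin n => p.1 = u ∧ t.val ≤ p.2.val)).card := by
    rw [Finset.prod_congr rfl (fun p _ => dist_false hmeas hdist p), Finset.prod_const]
  rw [hval]
  have hcard := card_le_n (Finset.univ.filter
      (fun p : Fin N × Fin n => p.1 = u ∧ t.val ≤ p.2.val))
    u (fun p hp => (Finset.mem_filter.1 hp).2.1)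
  exact tsub_le_tsub_left (pow_le_pow_right_of_le_one' tsub_le_self hcard) 1

lemma prod_Au [IsProbabilityMeasure μ] (hindep : iIndepFun χ μ)
    (hmeas : ∀ p, Measurable (χ p)) (t : Fin n) (s : Finset (Fin N)) :
    μ (⋂ u ∈ s, {ω | ∃ i : Fin n, i.val < t.val ∧ χ (u, i) ω = false})
      = ∏ u ∈ s, μ {ω | ∃ i : Fin n, i.val < t.val ∧ χ (u, i) ω = false} := by
  classical
  induction s using Finset.induction_on with
  | empty => simp
  | @insert a s ha ih =>
    rw [Finset.set_biInter_insert, Finset.prod_insert ha, ← ih]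
    have hdisj : Disjoint (Finset.univ.filter (fun p : Fin N × Fin n => p.1 = a))
        (Finset.univ.filter (fun p : Fin N × Fin n => p.1 ∈ s)) := by
      rw [Finset.disjoint_left]
      rintro ⟨v, i⟩ hpa hps
      simp only [Finset.mem_filter, Finset.mem_univ, true_and] at hpa hps
      exact ha (hpa ▸ hps)
    have key := indep_group_mul hindep hmeas _ _ hdisj
      {g : (p : (Finset.univ.filter (fun p : Fin N × Fin n => p.1 = a))) → Bool |
        ∃ i : Fin n, i.val < t.val ∧
          g ⟨(a, i), Finset.mem_filter.2 ⟨Finset.mem_univ _, rfl⟩⟩ = false}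
      {g : (p : (Finset.univ.filter (fun p : Fin N × Fin n => p.1 ∈ s))) → Bool |
        ∀ u, ∀ hu : u ∈ s, ∃ i : Fin n, i.val < t.val ∧
          g ⟨(u, i), Finset.mem_filter.2 ⟨Finset.mem_univ _, hu⟩⟩ = false}
    have hA : {ω | ∃ i : Fin n, i.val < t.val ∧ χ (a, i) ω = false}
        = (fun ω (p : (Finset.univ.filter (fun p : Fin N × Fin n => p.1 = a))) => χ p ω) ⁻¹'
          {g | ∃ i : Fin n, i.val < t.val ∧
            g ⟨(a, i), Finset.mem_filter.2 ⟨Finset.mem_univ _, rfl⟩⟩ = false} := rfl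
    have hB : (⋂ u ∈ s, {ω | ∃ i : Fin n, i.val < t.val ∧ χ (u, i) ω = false})
        = (fun ω (p : (Finset.univ.filter (fun p : Fin N × Fin n => p.1 ∈ s))) => χ p ω) ⁻¹'
          {g | ∀ u, ∀ hu : u ∈ s, ∃ i : Fin n, i.val < t.val ∧
            g ⟨(u, i), Finset.mem_filter.2 ⟨Finset.mem_univ _, hu⟩⟩ = false} := by
      ext ω
      simp only [Set.mem_iInter, Set.mem_preimage, Set.mem_setOf_eq]
    rw [hA, hB]
    exact key

lemma Du_inter_Eu (hindep : iIndepFun χ μ)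
    (hmeas : ∀ p, Measurable (χ p)) (t : Fin n) (u : Fin N) :
    μ ({ω | ∃ hne : (Finset.univ.filter
          (fun v : Fin N => ∀ i : Fin n, i.val < t.val → χ (v, i) ω = true)).Nonempty,
        (Finset.univ.filter
          (fun v : Fin N => ∀ i : Fin n, i.val < t.val → χ (v, i) ω = true)).min' hne = u}
      ∩ {ω | ∃ i : Fin n, t.val ≤ i.val ∧ χ (u, i) ω = true})
    = μ {ω | ∃ hne : (Finset.univ.filter
          (fun v : Fin N => ∀ i : Fin n, i.val < t.val → χ (v, i) ω = true)).Nonempty,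
        (Finset.univ.filter
          (fun v : Fin N => ∀ i : Fin n, i.val < t.val → χ (v, i) ω = true)).min' hne = u}
      * μ {ω | ∃ i : Fin n, t.val ≤ i.val ∧ χ (u, i) ω = true} := by
  classical
  have hdisj : Disjoint (Finset.univ.filter (fun p : Fin N × Fin n => p.2.val < t.val))
      (Finset.univ.filter (fun p : Fin N × Fin n => p.1 = u ∧ t.val ≤ p.2.val)) := by
    rw [Finset.disjoint_left]
    rintro ⟨v, i⟩ hpa hps
    simp only [Finset.mem_filter, Finset.mem_univ, true_and] at hpa hps
    omega
  have key := indep_group_mul hindep hmeas _ _ hdisj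
    {g : (p : (Finset.univ.filter (fun p : Fin N × Fin n => p.2.val < t.val))) → Bool |
      ∃ hne : (Finset.univ.filter (fun v : Fin N => ∀ i : Fin n, ∀ hi : i.val < t.val,
          g ⟨(v, i), Finset.mem_filter.2 ⟨Finset.mem_univ _, hi⟩⟩ = true)).Nonempty,
        (Finset.univ.filter (fun v : Fin N => ∀ i : Fin n, ∀ hi : i.val < t.val,
          g ⟨(v, i), Finset.mem_filter.2 ⟨Finset.mem_univ _, hi⟩⟩ = true)).min' hne = u}
    {g : (p : (Finset.univ.filter
        (fun p : Fin N × Fin n => p.1 = u ∧ t.val ≤ p.2.val))) → Bool |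
      ∃ i : Fin n, ∃ hi : t.val ≤ i.val,
        g ⟨(u, i), Finset.mem_filter.2 ⟨Finset.mem_univ _, rfl, hi⟩⟩ = true}
  convert key using 3 <;>
  · ext ω
    simp only [Set.mem_setOf_eq, Set.mem_preimage, exists_prop]


lemma bad1_le [IsProbabilityMeasure μ] (hindep : iIndepFun χ μ)
    (hmeas : ∀ p, Measurable (χ p))
    (hdist : ∀ p, μ {ω | χ p ω = true} = ENNReal.ofReal (1 / (4 * (n : ℝ) ^ 2)))
    (t : Fin n) :
    μ {ω | ¬ (Finset.univ.filter
        (fun u : Fin N => ∀ i : Fin n, i.val < t.val → χ (u, i) ω = true)).Nonempty}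
      ≤ (1 - (ENNReal.ofReal (1 / (4 * (n : ℝ) ^ 2))) ^ n) ^ N := by
  have hset : {ω | ¬ (Finset.univ.filter
        (fun u : Fin N => ∀ i : Fin n, i.val < t.val → χ (u, i) ω = true)).Nonempty}
      = ⋂ u ∈ (Finset.univ : Finset (Fin N)),
          {ω | ∃ i : Fin n, i.val < t.val ∧ χ (u, i) ω = false} := by
    ext ω
    constructor
    · intro h
      simp only [Set.mem_setOf_eq, Finset.not_nonempty_iff_eq_empty,
        Finset.filter_eq_empty_iff] at h
      simp only [Set.mem_iInter, Set.mem_setOf_eq]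
      intro u _
      have h2 := h (Finset.mem_univ u)
      push_neg at h2
      obtain ⟨i, hi, hf⟩ := h2
      exact ⟨i, hi, by simpa using hf⟩
    · intro h
      simp only [Set.mem_iInter, Set.mem_setOf_eq] at h
      simp only [Set.mem_setOf_eq, Finset.not_nonempty_iff_eq_empty,
        Finset.filter_eq_empty_iff]
      intro u _ hall
      obtain ⟨i, hi, hf⟩ := h u (Finset.mem_univ u)
      simp [hall i hi] at hf
  rw [hset, prod_Au hindep hmeas t]
  calc ∏ u ∈ (Finset.univ : Finset (Fin N)),
        μ {ω | ∃ i : Fin n, i.val < t.val ∧ χ (u, i) ω = false}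
      ≤ ∏ _u ∈ (Finset.univ : Finset (Fin N)),
          (1 - (ENNReal.ofReal (1 / (4 * (n : ℝ) ^ 2))) ^ n) :=
        Finset.prod_le_prod' (fun u _ => Au_le hindep hmeas hdist t u)
    _ = (1 - (ENNReal.ofReal (1 / (4 * (n : ℝ) ^ 2))) ^ n) ^ N := by
        rw [Finset.prod_const, Finset.card_univ, Fintype.card_fin]

lemma bad2_le [IsProbabilityMeasure μ] (hindep : iIndepFun χ μ)
    (hmeas : ∀ p, Measurable (χ p))
    (hdist : ∀ p, μ {ω | χ p ω = true} = ENNReal.ofReal (1 / (4 * (n : ℝ) ^ 2)))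
    (t : Fin n) :
    μ {ω | ∃ hne : (Finset.univ.filter
          (fun v : Fin N => ∀ i : Fin n, i.val < t.val → χ (v, i) ω = true)).Nonempty,
        ∃ i : Fin n, t.val ≤ i.val ∧ χ ((Finset.univ.filter
          (fun v : Fin N => ∀ i : Fin n, i.val < t.val → χ (v, i) ω = true)).min' hne, i) ω
          = true}
      ≤ 1 - (1 - ENNReal.ofReal (1 / (4 * (n : ℝ) ^ 2))) ^ n := by
  classical
  set Y := 1 - (1 - ENNReal.ofReal (1 / (4 * (n : ℝ) ^ 2))) ^ n with hY
  set D : Fin N → Set Ω := fun u => {ω | ∃ hne : (Finset.univ.filter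
      (fun v : Fin N => ∀ i : Fin n, i.val < t.val → χ (v, i) ω = true)).Nonempty,
      (Finset.univ.filter
        (fun v : Fin N => ∀ i : Fin n, i.val < t.val → χ (v, i) ω = true)).min' hne = u}
    with hD
  set E : Fin N → Set Ω := fun u =>
    {ω | ∃ i : Fin n, t.val ≤ i.val ∧ χ (u, i) ω = true} with hE
  have hsub : {ω | ∃ hne : (Finset.univ.filter
          (fun v : Fin N => ∀ i : Fin n, i.val < t.val → χ (v, i) ω = true)).Nonempty,
        ∃ i : Fin n, t.val ≤ i.val ∧ χ ((Finset.univ.filter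
          (fun v : Fin N => ∀ i : Fin n, i.val < t.val → χ (v, i) ω = true)).min' hne, i) ω
          = true} ⊆ ⋃ u : Fin N, D u ∩ E u := by
    rintro ω ⟨hne, i, hi, h⟩
    exact Set.mem_iUnion.2 ⟨_, ⟨⟨hne, rfl⟩, ⟨i, hi, h⟩⟩⟩
  have hDdisj : Pairwise (Function.onFun Disjoint D) := by
    intro u v huv
    simp only [Function.onFun]
    rw [Set.disjoint_left]
    rintro ω ⟨h1, e1⟩ ⟨h2, e2⟩
    exact huv (e1.symm.trans e2)
  have hDmeas : ∀ u, MeasurableSet (D u) := fun u =>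
    meas_ev hmeas (fun g => ∃ hne : (Finset.univ.filter
      (fun v : Fin N => ∀ i : Fin n, i.val < t.val → g (v, i) = true)).Nonempty,
      (Finset.univ.filter
        (fun v : Fin N => ∀ i : Fin n, i.val < t.val → g (v, i) = true)).min' hne = u)
  have hsumD : ∑ u : Fin N, μ (D u) ≤ 1 := by
    rw [← tsum_fintype (L := SummationFilter.unconditional _), ← measure_iUnion hDdisj hDmeas]
    exact prob_le_one
  calc μ {ω | ∃ hne : (Finset.univ.filter
          (fun v : Fin N => ∀ i : Fin n, i.val < t.val → χ (v, i) ω = true)).Nonempty,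
        ∃ i : Fin n, t.val ≤ i.val ∧ χ ((Finset.univ.filter
          (fun v : Fin N => ∀ i : Fin n, i.val < t.val → χ (v, i) ω = true)).min' hne, i) ω
          = true}
      ≤ μ (⋃ u : Fin N, D u ∩ E u) := measure_mono hsub
    _ ≤ ∑' u : Fin N, μ (D u ∩ E u) := measure_iUnion_le _
    _ = ∑ u : Fin N, μ (D u ∩ E u) := tsum_fintype _
    _ = ∑ u : Fin N, μ (D u) * μ (E u) := by
        refine Finset.sum_congr rfl (fun u _ => ?_)
        exact Du_inter_Eu hindep hmeas t u
    _ ≤ ∑ u : Fin N, μ (D u) * Y :=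
        Finset.sum_le_sum (fun u _ =>
          mul_le_mul_right (Eu_le hindep hmeas hdist t u) _)
    _ = (∑ u : Fin N, μ (D u)) * Y := by rw [Finset.sum_mul]
    _ ≤ 1 * Y := mul_le_mul_left hsumD Y
    _ = Y := one_mul Y

end SGDAux

/-- SGD good event: let `n ≥ 2048`, `δ = 1/(4n²)`, and let `U = Fin N` with `N ≥ n^{4n}`
(a fixed enumeration).  Let `V₁, …, V_n` be i.i.d. random subsets of `U` where each
element is included in each `Vᵢ` independently with probability `δ` (modelled by
independent Boolean indicators `χ (u, i)`).  With `P_t = ∩_{i<t} V_i`,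
`S_t = ∩_{i≥t} (U \ V_i)` and `J_t` the minimal-index element of `P_t`, the probability
that for all `t`, `P_t ≠ ∅` and `J_t ∈ S_t`, is at least
`1 - n(1 - δⁿ)^N - n(1 - (1-δ)ⁿ) ≥ 1/2`. -/
theorem sgd_good_event (n N : ℕ) (hn : 2048 ≤ n) (hN : n ^ (4 * n) ≤ N)
    (Ω : Type*) [MeasurableSpace Ω] (μ : Measure Ω) [IsProbabilityMeasure μ]
    (χ : (Fin N × Fin n) → Ω → Bool)
    (hmeas : ∀ p, Measurable (χ p))
    (hindep : iIndepFun χ μ)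
    (hdist : ∀ p, μ {ω | χ p ω = true} = ENNReal.ofReal (1 / (4 * (n : ℝ) ^ 2))) :
    (1 : ℝ) / 2 ≤ 1 - n * (1 - (1 / (4 * (n : ℝ) ^ 2)) ^ n) ^ N
        - n * (1 - (1 - 1 / (4 * (n : ℝ) ^ 2)) ^ n) ∧
    ENNReal.ofReal (1 - n * (1 - (1 / (4 * (n : ℝ) ^ 2)) ^ n) ^ N
        - n * (1 - (1 - 1 / (4 * (n : ℝ) ^ 2)) ^ n))
      ≤ μ {ω | ∀ t : Fin n,
          ∃ hne : (Finset.univ.filter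
              (fun u : Fin N => ∀ i : Fin n, i.val < t.val → χ (u, i) ω = true)).Nonempty,
            ∀ i : Fin n, t.val ≤ i.val →
              χ ((Finset.univ.filter
                (fun u : Fin N => ∀ i : Fin n, i.val < t.val → χ (u, i) ω = true)).min' hne,
                i) ω = false} := by

  classical
  refine ⟨SGDAux.sgd_numeric n N hn hN, ?_⟩
  set δ : ℝ := 1 / (4 * (n : ℝ) ^ 2) with hδ
  have hδ0 : (0:ℝ) ≤ δ := SGDAux.delta_nonneg
  have hδ1 : δ ≤ 1 := SGDAux.delta_le_one
  set d := ENNReal.ofReal δ with hd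
  set G : Set Ω := {ω | ∀ t : Fin n,
      ∃ hne : (Finset.univ.filter
          (fun u : Fin N => ∀ i : Fin n, i.val < t.val → χ (u, i) ω = true)).Nonempty,
        ∀ i : Fin n, t.val ≤ i.val →
          χ ((Finset.univ.filter
            (fun u : Fin N => ∀ i : Fin n, i.val < t.val → χ (u, i) ω = true)).min' hne,
            i) ω = false} with hG
  set B1 : Fin n → Set Ω := fun t => {ω | ¬ (Finset.univ.filter
      (fun u : Fin N => ∀ i : Fin n, i.val < t.val → χ (u, i) ω = true)).Nonempty} with hB1
  set B2 : Fin n → Set Ω := fun t => {ω | ∃ hne : (Finset.univ.filter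
        (fun v : Fin N => ∀ i : Fin n, i.val < t.val → χ (v, i) ω = true)).Nonempty,
      ∃ i : Fin n, t.val ≤ i.val ∧ χ ((Finset.univ.filter
        (fun v : Fin N => ∀ i : Fin n, i.val < t.val → χ (v, i) ω = true)).min' hne, i) ω
        = true} with hB2
  -- complement of G is covered by the bad events
  have hGc : Gᶜ ⊆ ⋃ t : Fin n, (B1 t ∪ B2 t) := by
    intro ω hω
    rw [Set.mem_compl_iff, hG, Set.mem_setOf_eq, not_forall] at hω
    obtain ⟨t, ht⟩ := hω
    by_cases hne : (Finset.univ.filter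
        (fun u : Fin N => ∀ i : Fin n, i.val < t.val → χ (u, i) ω = true)).Nonempty
    · refine Set.mem_iUnion.2 ⟨t, Or.inr ?_⟩
      have h2 : ¬ ∀ i : Fin n, t.val ≤ i.val →
          χ ((Finset.univ.filter
            (fun u : Fin N => ∀ i : Fin n, i.val < t.val → χ (u, i) ω = true)).min' hne,
            i) ω = false := fun hall => ht ⟨hne, hall⟩
      push_neg at h2
      obtain ⟨i, hi, hf⟩ := h2
      exact ⟨hne, i, hi, by simpa using hf⟩
    · exact Set.mem_iUnion.2 ⟨t, Or.inl hne⟩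
  -- union bound
  have hone : (1:ENNReal) ≤ μ G + μ (⋃ t : Fin n, (B1 t ∪ B2 t)) := by
    calc (1:ENNReal) = μ Set.univ := measure_univ.symm
      _ ≤ μ (G ∪ ⋃ t : Fin n, (B1 t ∪ B2 t)) := by
          apply measure_mono
          intro ω _
          by_cases h : ω ∈ G
          · exact Or.inl h
          · exact Or.inr (hGc h)
      _ ≤ μ G + μ (⋃ t : Fin n, (B1 t ∪ B2 t)) := measure_union_le _ _
  have ha0 : (0:ℝ) ≤ 1 - δ ^ n := by
    have := pow_le_one₀ hδ0 hδ1 (n := n); linarith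
  have hb0 : (0:ℝ) ≤ 1 - (1 - δ) ^ n := by
    have := pow_le_one₀ (by linarith : (0:ℝ) ≤ 1 - δ) (by linarith : 1 - δ ≤ 1) (n := n)
    linarith
  have hXr : (1 - d ^ n) ^ N = ENNReal.ofReal ((1 - δ ^ n) ^ N) := by
    rw [ENNReal.ofReal_pow ha0]
    congr 1
    rw [ENNReal.ofReal_sub _ (pow_nonneg hδ0 n), ENNReal.ofReal_one,
      ENNReal.ofReal_pow hδ0]
  have hYr : 1 - (1 - d) ^ n = ENNReal.ofReal (1 - (1 - δ) ^ n) := by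
    have e2 : 1 - d = ENNReal.ofReal (1 - δ) := by
      rw [ENNReal.ofReal_sub _ hδ0, ENNReal.ofReal_one]
    rw [e2, ← ENNReal.ofReal_pow (by linarith), ENNReal.ofReal_sub _
      (pow_nonneg (by linarith) n), ENNReal.ofReal_one]
  have hUb : μ (⋃ t : Fin n, (B1 t ∪ B2 t))
      ≤ ENNReal.ofReal (n * (1 - δ ^ n) ^ N + n * (1 - (1 - δ) ^ n)) := by
    calc μ (⋃ t : Fin n, (B1 t ∪ B2 t)) ≤ ∑' t : Fin n, μ (B1 t ∪ B2 t) :=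
          measure_iUnion_le _
      _ = ∑ t : Fin n, μ (B1 t ∪ B2 t) := tsum_fintype _
      _ ≤ ∑ _t : Fin n, ((1 - d ^ n) ^ N + (1 - (1 - d) ^ n)) := by
          refine Finset.sum_le_sum (fun t _ => ?_)
          refine (measure_union_le _ _).trans (add_le_add ?_ ?_)
          · exact SGDAux.bad1_le hindep hmeas hdist t
          · exact SGDAux.bad2_le hindep hmeas hdist t
      _ = (n : ENNReal) * ((1 - d ^ n) ^ N + (1 - (1 - d) ^ n)) := by
          rw [Finset.sum_const, Finset.card_univ, Fintype.card_fin, nsmul_eq_mul]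
      _ = ENNReal.ofReal (n * (1 - δ ^ n) ^ N + n * (1 - (1 - δ) ^ n)) := by
          rw [hXr, hYr, ← ENNReal.ofReal_add (by positivity) (by positivity),
            ← ENNReal.ofReal_natCast n, ← ENNReal.ofReal_mul (Nat.cast_nonneg n),
            mul_add]
  -- conclude
  have hfin : ENNReal.ofReal (1 - n * (1 - δ ^ n) ^ N - n * (1 - (1 - δ) ^ n))
      = 1 - ENNReal.ofReal (n * (1 - δ ^ n) ^ N + n * (1 - (1 - δ) ^ n)) := by
    rw [sub_sub, ENNReal.ofReal_sub _ (by positivity), ENNReal.ofReal_one]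
  rw [hfin, tsub_le_iff_right]
  calc (1:ENNReal) ≤ μ G + μ (⋃ t : Fin n, (B1 t ∪ B2 t)) := hone
    _ ≤ μ G + ENNReal.ofReal (n * (1 - δ ^ n) ^ N + n * (1 - (1 - δ) ^ n)) :=
        add_le_add_right hUb _
end

section
/- Fix T > 0 and 0 < η ≤ 1/(5√T), let d = max(25η²T², 1), and define f(w) = max(0, max_{i∈[d]} (1/√d − w[i] − ηi/(4d))) on ℝ^d. Then f is a convex 1-Lipschitz function, and for the iterates of (sub)gradient descent w_{t+1} = w_t − η·∇f(w_t) initialized at w₁ = 0: (i) every coordinate of every iterate w_t satisfies w_t[i] ≤ 1/(2√d); (ii) at every iterate the inner maximum over i is attained at a unique index with a strict margin of more than η/(8d) over all other indices and over 0; and (iii) every m-suffix average w̄ of the iterates satisfies f(w̄) − min_w f(w) ≥ 1/(4√d) = min(1/4, 1/(20ηT)). -/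
theorem coord_dist_le (n : ℕ) (x y : EuclideanSpace ℝ (Fin n)) (i : Fin n) :
    dist (x i) (y i) ≤ dist x y := by
  rw [EuclideanSpace.dist_eq]
  have h1 : dist (x i) (y i) ^ 2 ≤ ∑ j : Fin n, dist (x j) (y j) ^ 2 :=
    Finset.single_le_sum (f := fun j => dist (x j) (y j) ^ 2) (fun j _ => sq_nonneg _)
      (Finset.mem_univ i)
  calc dist (x i) (y i) = Real.sqrt (dist (x i) (y i) ^ 2) := (Real.sqrt_sq dist_nonneg).symm
    _ ≤ _ := Real.sqrt_le_sqrt h1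

theorem grad_aff (n : ℕ) (j : Fin n) (c : ℝ) (x : EuclideanSpace ℝ (Fin n)) :
    HasGradientAt (fun v : EuclideanSpace ℝ (Fin n) => c - v j) (-EuclideanSpace.single j (1:ℝ)) x := by
  rw [hasGradientAt_iff_hasFDerivAt]
  have h1 : (fun v : EuclideanSpace ℝ (Fin n) => c - v j)
      = fun v => c + (InnerProductSpace.toDual ℝ _ (-EuclideanSpace.single j (1:ℝ))) v := by
    funext v
    simp [InnerProductSpace.toDual_apply_apply, EuclideanSpace.inner_single_left]
    ring
  rw [h1]
  have := (hasFDerivAt_const c x).add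
    ((InnerProductSpace.toDual ℝ _ (-EuclideanSpace.single j (1:ℝ))).hasFDerivAt)
  rw [zero_add] at this
  exact this

-- nat division/mod step
theorem cnt_step (dd t : ℕ) (hdd0 : 0 < dd) (i : ℕ) (hi : i < dd) :
    (t+1)/dd + (if i < (t+1) % dd then 1 else 0)
      = t/dd + (if i < t % dd then 1 else 0) + (if i = t % dd then 1 else 0) := by
  have ht : dd * (t/dd) + t % dd = t := Nat.div_add_mod t dd
  have hr : t % dd < dd := Nat.mod_lt t hdd0
  by_cases h : t % dd + 1 = dd
  · have h1 : t + 1 = dd * (t/dd + 1) := by rw [Nat.mul_add, Nat.mul_one]; omega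
    have h2 : (t+1)/dd = t/dd + 1 := by rw [h1, Nat.mul_div_cancel_left _ hdd0]
    have h3 : (t+1) % dd = 0 := by rw [h1, Nat.mul_mod_right]
    rw [h2, h3]
    split_ifs <;> omega
  · have h1 : t + 1 = dd * (t/dd) + (t % dd + 1) := by omega
    have h2 : (t+1)/dd = t/dd := by
      have := Nat.div_eq_of_lt (a := t % dd + 1) (b := dd) (by omega)
      rw [h1, Nat.mul_add_div hdd0, this, Nat.add_zero]
    have h3 : (t+1) % dd = t % dd + 1 := by
      rw [h1, Nat.mul_add_mod, Nat.mod_eq_of_lt (by omega)]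
    rw [h2, h3]
    split_ifs <;> omega

set_option maxHeartbeats 1000000 in
/-- Lower bound construction for the `Ω(min(1, 1/(ηT)))` term.  Fix `T > 0`,
`0 < η ≤ 1/(5√T)`, `d = max(25η²T², 1)`, and
`f(w) = max(0, max_{i ∈ [d]} (1/√d - w[i] - ηi/(4d)))` on `ℝ^d`.  Then `f` is convex and
`1`-Lipschitz, and for the gradient descent iterates `w_{t+1} = w_t - η·∇f(w_t)` started
at `w₁ := w 0 = 0`: (i) every coordinate of every iterate is at most `1/(2√d)`;
(ii) the inner maximum is attained at a unique index, with strict margin more than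
`η/(8d)` over every other index and over `0`; and (iii) every `m`-suffix average `w̄`
satisfies `f(w̄) - min f ≥ 1/(4√d) = min(1/4, 1/(20ηT))` (where `min f = 0`). -/
theorem gd_small_eta_lower_bound (T dd : ℕ) (hT : 0 < T)
    (η : ℝ) (hη : 0 < η) (hη' : η ≤ 1 / (5 * Real.sqrt T))
    (hdd : (dd : ℝ) = max (25 * η ^ 2 * (T : ℝ) ^ 2) 1)
    (f : EuclideanSpace ℝ (Fin dd) → ℝ)
    (hf : ∀ w, f w = max 0 (⨆ i : Fin dd,
      (1 / Real.sqrt dd - w i - η * ((i : ℕ) + 1) / (4 * dd))))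
    (w : ℕ → EuclideanSpace ℝ (Fin dd))
    (hw0 : w 0 = 0)
    (hrec : ∀ t : ℕ, w (t + 1) = w t - η • gradient f (w t)) :
    (ConvexOn ℝ Set.univ f ∧ LipschitzWith 1 f) ∧
    (∀ t < T, ∀ i : Fin dd, w t i ≤ 1 / (2 * Real.sqrt dd)) ∧
    (∀ t < T, ∃ j : Fin dd,
      (∀ k : Fin dd, k ≠ j →
        (1 / Real.sqrt dd - w t k - η * ((k : ℕ) + 1) / (4 * dd)) + η / (8 * dd)
          < 1 / Real.sqrt dd - w t j - η * ((j : ℕ) + 1) / (4 * dd)) ∧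
      η / (8 * dd) < 1 / Real.sqrt dd - w t j - η * ((j : ℕ) + 1) / (4 * dd)) ∧
    ((∀ v, 0 ≤ f v) ∧ (∃ v, f v = 0) ∧
      (1 : ℝ) / (4 * Real.sqrt dd) = min (1 / 4) (1 / (20 * η * T)) ∧
      ∀ m : ℕ, 1 ≤ m → m ≤ T →
        1 / (4 * Real.sqrt dd)
          ≤ f ((m : ℝ)⁻¹ • ∑ i ∈ Finset.range m, w (T - 1 - i))) := by
  have hdd1 : (1:ℝ) ≤ (dd:ℝ) := by rw [hdd]; exact le_max_right _ _
  have hddn : 1 ≤ dd := by exact_mod_cast hdd1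
  have hdd0 : 0 < dd := hddn
  haveI hne : Nonempty (Fin dd) := ⟨⟨0, hdd0⟩⟩
  have hT1 : (1:ℝ) ≤ (T:ℝ) := by exact_mod_cast hT
  set s := Real.sqrt dd with hs
  have hs1 : (1:ℝ) ≤ s := by
    rw [hs, ← Real.sqrt_one]; exact Real.sqrt_le_sqrt hdd1
  have hs0 : (0:ℝ) < s := lt_of_lt_of_le one_pos hs1
  have hssq : s * s = (dd:ℝ) := Real.mul_self_sqrt (by positivity)
  have hsmax : s = max (5*η*T) 1 := by
    rw [hs, hdd]
    have h1 : 25 * η ^ 2 * (T:ℝ) ^ 2 = (5*η*T)^2 := by ring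
    have hmono : Monotone Real.sqrt := fun a b hab => Real.sqrt_le_sqrt hab
    rw [h1, Monotone.map_max hmono, Real.sqrt_sq (by positivity), Real.sqrt_one]
  have h5ηT : 5*η*(T:ℝ) ≤ s := hsmax ▸ le_max_left _ _
  have hηs : η ≤ 1/(5*s) := by
    have hsT : s ≤ Real.sqrt T := by
      apply Real.sqrt_le_sqrt
      rw [hdd]
      have hT0 : (0:ℝ) < Real.sqrt T := Real.sqrt_pos.2 (by exact_mod_cast hT)
      have h2 : η * (5 * Real.sqrt T) ≤ 1 := by
        rw [le_div_iff₀ (by positivity)] at hη'; exact hη'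
      have h3 : Real.sqrt T * Real.sqrt T = (T:ℝ) := Real.mul_self_sqrt (by positivity)
      have h4 := mul_le_mul h2 h2 (by positivity) (by norm_num : (0:ℝ) ≤ 1)
      apply max_le
      · nlinarith [h4, h3, hT1]
      · exact hT1
    calc η ≤ 1/(5*Real.sqrt T) := hη'
      _ ≤ 1/(5*s) := one_div_le_one_div_of_le (by positivity) (by nlinarith [hsT])

  have hη5s : η * (5*s) ≤ 1 := by
    rw [le_div_iff₀ (by positivity)] at hηs; exact hηs
  -- basic bound: η * (t/dd) ≤ 1/(5s) for t < T
  have hb1 : ∀ t : ℕ, t < T → η * ((t / dd : ℕ) : ℝ) ≤ 1/(5*s) := by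
    intro t ht
    have h1 : ((t / dd : ℕ) : ℝ) * dd ≤ (t:ℝ) := by exact_mod_cast Nat.div_mul_le_self t dd
    have h2 : (t:ℝ) ≤ T := by exact_mod_cast ht.le
    rw [le_div_iff₀ (by positivity)]
    nlinarith [mul_le_mul_of_nonneg_left h1 hη.le, mul_le_mul_of_nonneg_left h2 hη.le,
      hs0, hssq, h5ηT, (Nat.cast_nonneg (t/dd) : (0:ℝ) ≤ ((t/dd : ℕ):ℝ)), mul_pos hη hs0]
  have hD0 : (0:ℝ) < (dd:ℝ) := by linarith
  have hbdd : ∀ v : EuclideanSpace ℝ (Fin dd), BddAbove (Set.range fun i : Fin dd =>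
      (1/s - v i - η * (((i:ℕ):ℝ)+1)/(4*dd))) := fun v => Set.Finite.bddAbove (Set.finite_range _)
  -- margins at the iterate, given the count formula
  have key : ∀ t, t < T →
      (∀ i : Fin dd, w t i = η * (((t / dd : ℕ):ℝ) + if (i:ℕ) < t % dd then (1:ℝ) else 0)) →
      ((∀ k : Fin dd, k ≠ (⟨t % dd, Nat.mod_lt t hdd0⟩ : Fin dd) →
        (1/s - w t k - η * (((k:ℕ):ℝ)+1)/(4*dd)) + η/(8*dd)
          < 1/s - w t ⟨t % dd, Nat.mod_lt t hdd0⟩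
              - η * ((((⟨t % dd, Nat.mod_lt t hdd0⟩ : Fin dd) : ℕ):ℝ)+1)/(4*dd)) ∧
       η/(8*dd) < 1/s - w t ⟨t % dd, Nat.mod_lt t hdd0⟩
              - η * ((((⟨t % dd, Nat.mod_lt t hdd0⟩ : Fin dd) : ℕ):ℝ)+1)/(4*dd)) := by
    intro t ht hP
    set j : Fin dd := ⟨t % dd, Nat.mod_lt t hdd0⟩ with hj
    have hwj : w t j = η * ((t/dd : ℕ):ℝ) := by
      rw [hP j]; simp [hj]
    have hq := hb1 t ht
    have hjd : ((t % dd : ℕ):ℝ) + 1 ≤ (dd:ℝ) := by exact_mod_cast Nat.mod_lt t hdd0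
    have e2 : η * (((t % dd : ℕ):ℝ)+1)/(4*dd) ≤ η/4 := by
      rw [div_le_div_iff₀ (by positivity) (by norm_num)]
      nlinarith [hη.le]
    have e3 : η/(8*dd) ≤ η/8 := by
      rw [div_le_div_iff₀ (by positivity) (by norm_num)]
      nlinarith [hη.le]
    constructor
    · intro k hk
      rw [hP k, hwj]
      have hkd : ((k:ℕ):ℝ) + 1 ≤ (dd:ℝ) := by exact_mod_cast k.2
      by_cases hlt : (k:ℕ) < t % dd
      · rw [if_pos hlt]
        have e1 : 0 ≤ η * (((k:ℕ):ℝ)+1)/(4*dd) := by positivity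
        have hjc : ((j:ℕ):ℝ) = ((t % dd : ℕ):ℝ) := by norm_num [hj]
        rw [hjc]
        have hx : η * (((t/dd : ℕ):ℝ) + 1) = η * ((t/dd : ℕ):ℝ) + η := by ring
        linarith [e1, e2, e3, hη, hx.le, hx.ge]
      · have hgt : t % dd < (k:ℕ) := by
          have hkj : (k:ℕ) ≠ t % dd := fun hh => hk (Fin.ext (by simp [hj, hh]))
          omega
        rw [if_neg hlt]
        have hky : ((t % dd : ℕ):ℝ) + 1 ≤ ((k:ℕ):ℝ) := by exact_mod_cast hgt
        have h8 : η/(8*(dd:ℝ)) < η/(4*dd) := by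
          apply div_lt_div_of_pos_left hη (by positivity) (by linarith)
        have h4 : η/(4*(dd:ℝ)) ≤ (η*(((k:ℕ):ℝ)+1) - η*(((t % dd:ℕ):ℝ)+1))/(4*dd) := by
          apply (div_le_div_iff_of_pos_right (by positivity)).2
          nlinarith [mul_le_mul_of_nonneg_left hky hη.le]
        have hsub : (η*(((k:ℕ):ℝ)+1) - η*(((t % dd:ℕ):ℝ)+1))/(4*(dd:ℝ))
            = η*(((k:ℕ):ℝ)+1)/(4*dd) - η*(((t % dd:ℕ):ℝ)+1)/(4*dd) := sub_div _ _ _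
        have hjc : ((j:ℕ):ℝ) = ((t % dd : ℕ):ℝ) := by norm_num [hj]
        rw [hjc]
        linarith [h8, h4, hsub]
    · rw [hwj]
      have e4 : η/4 ≤ 1/(20*s) := by
        rw [div_le_div_iff₀ (by norm_num) (by positivity)]
        linarith [hη5s]
      have e3' : η/8 ≤ 1/(40*s) := by
        rw [div_le_div_iff₀ (by norm_num) (by positivity)]
        linarith [hη5s]
      have e5 : 1/(40*s) < 1/s - 1/(5*s) - 1/(20*s) := by
        have h : 1/s - 1/(5*s) - 1/(20*s) - 1/(40*s) = (29/40)*(1/s) := by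
          field_simp; ring
        linarith [one_div_pos.mpr hs0, h]
      have hjc : ((j:ℕ):ℝ) = ((t % dd : ℕ):ℝ) := by norm_num [hj]
      rw [hjc]
      linarith [hq, e2, e3, e4, e3', e5]
  -- the count formula by induction
  have hP : ∀ t, t < T → ∀ i : Fin dd,
      w t i = η * (((t / dd : ℕ):ℝ) + if (i:ℕ) < t % dd then (1:ℝ) else 0) := by
    intro t
    induction t with
    | zero => intro _ i; rw [hw0]; simp
    | succ t ih =>
      intro ht i
      have hPt := ih (by omega)
      obtain ⟨hm, hpos⟩ := key t (by omega) hPt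
      set j : Fin dd := ⟨t % dd, Nat.mod_lt t hdd0⟩ with hj
      have hgrad : gradient f (w t) = -EuclideanSpace.single j (1:ℝ) := by
        have hloc : f =ᶠ[nhds (w t)]
            (fun v => (1/s - η * (((t % dd : ℕ):ℝ)+1)/(4*dd)) - v j) := by
          refine Metric.eventually_nhds_iff.2 ⟨η/(17*dd), by positivity, ?_⟩
          intro v hv
          have hco : ∀ i : Fin dd, |v i - w t i| < η/(17*dd) := fun i => by
            refine lt_of_le_of_lt ?_ hv
            rw [← Real.dist_eq]; exact coord_dist_le _ _ _ i
          have hrr : 2*(η/(17*(dd:ℝ))) < η/(8*dd) := by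
            have he : 2*(η/(17*(dd:ℝ))) = (2*η)/(17*dd) := by ring
            rw [he, div_lt_div_iff₀ (by positivity) (by positivity)]
            nlinarith [mul_pos hη hD0]
          have hposv : 0 < 1/s - v j - η * (((t % dd : ℕ):ℝ)+1)/(4*dd) := by
            have h1 := abs_lt.1 (hco j)
            have h2 : η/(17*(dd:ℝ)) < η/(8*dd) := by
              apply div_lt_div_of_pos_left hη (by positivity) (by linarith)
            have hjc : ((j:ℕ):ℝ) = ((t % dd : ℕ):ℝ) := by norm_num [hj]
            rw [hjc] at hpos
            linarith [hpos, h1.1, h1.2, h2]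
          have hsup : (⨆ i : Fin dd, (1/s - v i - η * (((i:ℕ):ℝ)+1)/(4*dd)))
              = 1/s - v j - η * (((t % dd:ℕ):ℝ)+1)/(4*dd) := by
            apply le_antisymm
            · apply ciSup_le
              intro k
              by_cases hkj : k = j
              · rw [hkj]
              · have hmk := hm k hkj
                have h1 := abs_lt.1 (hco k)
                have h2 := abs_lt.1 (hco j)
                have hjc : ((j:ℕ):ℝ) = ((t % dd : ℕ):ℝ) := by norm_num [hj]
                rw [hjc] at hmk
                linarith [hmk, h1.1, h1.2, h2.1, h2.2, hrr]
            · have h := le_ciSup (hbdd v) j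
              have hjc : ((j:ℕ):ℝ) = ((t % dd : ℕ):ℝ) := by norm_num [hj]
              rw [hjc] at h
              exact h
          rw [hf v, hsup, max_eq_right hposv.le]
          ring
        have hFg := grad_aff dd j (1/s - η * (((t % dd : ℕ):ℝ)+1)/(4*dd)) (w t)
        rw [hasGradientAt_iff_hasFDerivAt] at hFg
        have hFf := hFg.congr_of_eventuallyEq hloc
        exact (hasGradientAt_iff_hasFDerivAt.2 hFf).gradient
      rw [hrec t, hgrad]
      have happ : (w t - η • (-EuclideanSpace.single j (1:ℝ))) i
          = w t i + η * (if i = j then 1 else 0) := by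
        simp [EuclideanSpace.single_apply]
      rw [happ, hPt i]
      have hcnt := cnt_step dd t hdd0 i i.2
      have hcast : (((t+1)/dd : ℕ):ℝ) + (if (i:ℕ) < (t+1) % dd then (1:ℝ) else 0)
          = ((t/dd : ℕ):ℝ) + (if (i:ℕ) < t % dd then (1:ℝ) else 0)
            + (if (i:ℕ) = t % dd then (1:ℝ) else 0) := by
        have := congrArg (fun n : ℕ => (n:ℝ)) hcnt
        push_cast at this
        convert this using 2
      rw [hcast]
      have hij : (if i = j then (1:ℝ) else 0) = (if (i:ℕ) = t % dd then (1:ℝ) else 0) := by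
        congr 1
        simp [Fin.ext_iff, hj]
      rw [hij]
      ring
  refine ⟨⟨?_, ?_⟩, ?_, ?_, ?_, ?_, ?_, ?_⟩
  · -- convexity
    constructor
    · exact convex_univ
    intro x _ y _ a b ha hb hab
    have hge : ∀ z : EuclideanSpace ℝ (Fin dd), ∀ i : Fin dd,
        1/s - z i - η * (((i:ℕ):ℝ)+1)/(4*dd) ≤ f z := by
      intro z i
      rw [hf z]
      exact le_trans (le_ciSup (hbdd z) i) (le_max_right _ _)
    have hf0 : ∀ z, 0 ≤ f z := fun z => by rw [hf z]; exact le_max_left _ _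
    rw [hf (a • x + b • y)]
    apply max_le
    · have := add_nonneg (mul_nonneg ha (hf0 x)) (mul_nonneg hb (hf0 y))
      simpa using this
    apply ciSup_le
    intro i
    have h1 : (a • x + b • y) i = a * x i + b * y i := rfl
    rw [h1]
    have h2 : 1/s - (a * x i + b * y i) - η*(((i:ℕ):ℝ)+1)/(4*dd)
        = a * (1/s - x i - η*(((i:ℕ):ℝ)+1)/(4*dd)) + b * (1/s - y i - η*(((i:ℕ):ℝ)+1)/(4*dd)) := by
      linear_combination (1/s - η*(((i:ℕ):ℝ)+1)/(4*dd)) * hab.symm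
    rw [h2]
    have := add_le_add (mul_le_mul_of_nonneg_left (hge x i) ha)
      (mul_le_mul_of_nonneg_left (hge y i) hb)
    simpa using this
  · -- Lipschitz
    have hge : ∀ z : EuclideanSpace ℝ (Fin dd), ∀ i : Fin dd,
        1/s - z i - η * (((i:ℕ):ℝ)+1)/(4*dd) ≤ f z := by
      intro z i
      rw [hf z]
      exact le_trans (le_ciSup (hbdd z) i) (le_max_right _ _)
    have hf0 : ∀ z, 0 ≤ f z := fun z => by rw [hf z]; exact le_max_left _ _
    have hkey : ∀ x y : EuclideanSpace ℝ (Fin dd), f x ≤ f y + dist x y := by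
      intro x y
      rw [hf x]
      apply max_le
      · exact add_nonneg (hf0 y) dist_nonneg
      apply ciSup_le
      intro i
      have h1 : y i - x i ≤ dist x y := by
        calc y i - x i ≤ |x i - y i| := by rw [abs_sub_comm]; exact le_abs_self _
          _ ≤ dist x y := by rw [← Real.dist_eq]; exact coord_dist_le dd x y i
      linarith [hge y i, h1]
    apply LipschitzWith.of_dist_le_mul
    intro x y
    rw [NNReal.coe_one, one_mul, Real.dist_eq, abs_sub_le_iff]
    constructor
    · linarith [hkey x y]
    · have := hkey y x
      rw [dist_comm] at this
      linarith
  · -- (i) coordinate bound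
    intro t ht i
    rw [hP t ht i, mul_add]
    have he : (if (i:ℕ) < t % dd then (1:ℝ) else 0) ≤ 1 := by split_ifs <;> norm_num
    have he2 : η * (if (i:ℕ) < t % dd then (1:ℝ) else 0) ≤ η * 1 :=
      mul_le_mul_of_nonneg_left he hη.le
    have e5 : 1/(5*s) + 1/(5*s) ≤ 1/(2*s) := by
      have h : 1/(2*s) - (1/(5*s) + 1/(5*s)) = (1/10)*(1/s) := by field_simp; ring
      nlinarith [one_div_pos.mpr hs0]
    linarith [hb1 t ht, hηs, he2]
  · -- (ii) margins
    intro t ht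
    exact ⟨_, key t ht (hP t ht)⟩
  · -- f nonneg
    intro v; rw [hf v]; exact le_max_left _ _
  · -- minimum attained
    refine ⟨(WithLp.toLp 2 (fun _ => 1/s) : EuclideanSpace ℝ (Fin dd)), ?_⟩
    rw [hf _]
    apply max_eq_left
    apply ciSup_le
    intro i
    have h0 : (0:ℝ) ≤ η * (((i:ℕ):ℝ)+1)/(4*dd) := by positivity
    show (1:ℝ)/s - 1/s - η * (((i:ℕ):ℝ)+1)/(4*dd) ≤ 0
    linarith
  · -- min identity
    have hT0 : (0:ℝ) < T := by exact_mod_cast hT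
    rcases le_total (5*η*(T:ℝ)) 1 with h|h
    · rw [hsmax, max_eq_right h, min_eq_left]
      · norm_num
      · exact one_div_le_one_div_of_le (by positivity) (by nlinarith)
    · rw [hsmax, max_eq_left h, min_eq_right]
      · rw [show (4*(5*η*(T:ℝ))) = 20*η*T by ring]
      · exact one_div_le_one_div_of_le (by norm_num) (by nlinarith)
  · -- (iii)
    intro m hm1 hmT
    set L : Fin dd := ⟨dd - 1, by omega⟩ with hL
    set v : EuclideanSpace ℝ (Fin dd) := (m:ℝ)⁻¹ • ∑ i ∈ Finset.range m, w (T-1-i) with hv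
    have hm0 : (0:ℝ) < m := by exact_mod_cast hm1
    have hvL : v L ≤ 1/(5*s) := by
      have hterm : ∀ i ∈ Finset.range m, w (T-1-i) L ≤ 1/(5*s) := by
        intro i hi
        have htlt : T-1-i < T := by omega
        rw [hP _ htlt L]
        have hno : ¬ ((L:ℕ) < (T-1-i) % dd) := by
          have := Nat.mod_lt (T-1-i) hdd0
          simp only [hL]
          omega
        rw [if_neg hno, add_zero]
        exact hb1 _ htlt
      have happ : v L = (m:ℝ)⁻¹ * ∑ i ∈ Finset.range m, w (T-1-i) L := by
        have h1 : v L = (m:ℝ)⁻¹ * (∑ i ∈ Finset.range m, w (T-1-i)) L := rfl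
        have h2 := map_sum (EuclideanSpace.proj L : EuclideanSpace ℝ (Fin dd) →L[ℝ] ℝ)
          (fun i => w (T-1-i)) (Finset.range m)
        simp only [PiLp.proj_apply] at h2
        rw [h1, h2]
      rw [happ]
      have hsle : ∑ i ∈ Finset.range m, w (T-1-i) L ≤ (m:ℝ) * (1/(5*s)) := by
        calc ∑ i ∈ Finset.range m, w (T-1-i) L ≤ ∑ i ∈ Finset.range m, 1/(5*s) :=
              Finset.sum_le_sum hterm
          _ = (m:ℝ) * (1/(5*s)) := by
              rw [Finset.sum_const, Finset.card_range, nsmul_eq_mul]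
      calc (m:ℝ)⁻¹ * ∑ i ∈ Finset.range m, w (T-1-i) L
          ≤ (m:ℝ)⁻¹ * ((m:ℝ) * (1/(5*s))) := mul_le_mul_of_nonneg_left hsle (by positivity)
        _ = 1/(5*s) := by field_simp
    rw [hf v]
    have hLval := le_ciSup (hbdd v) L
    have hLn : (((L:ℕ):ℝ)+1) = (dd:ℝ) := by
      simp only [hL]
      push_cast [Nat.cast_sub hddn]
      ring
    have hd4 : η * ((dd:ℝ))/(4*dd) = η/4 := by field_simp
    have e4 : η/4 ≤ 1/(20*s) := by
      rw [div_le_div_iff₀ (by norm_num) (by positivity)]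
      linarith [hη5s]
    have hfinal : 1/(4*s) ≤ 1/s - 1/(5*s) - 1/(20*s) := by
      have h : 1/s - 1/(5*s) - 1/(20*s) - 1/(4*s) = (1/2)*(1/s) := by field_simp; ring
      nlinarith [one_div_pos.mpr hs0]
    calc 1/(4*s) ≤ 1/s - v L - η*(((L:ℕ):ℝ)+1)/(4*dd) := by
          rw [hLn, hd4]
          linarith [hvL, e4, hfinal]
      _ ≤ _ := le_trans hLval (le_max_right _ _)
end

section
/- Let U be a set of unit vectors in ℝ^{d'} with |⟨u,v⟩| ≤ 1/8 for distinct u, v ∈ U, let η > 0, u₀ ∈ U, 3 ≤ m < T, and δ₂ < 3η/16 − η/64. Suppose w ∈ (ℝ^{d'})^T has blocks w^{(1)} = cηu₀ with −3/8 ≤ c ≤ 0, w^{(k)} = (η/8)u₀ for 2 ≤ k ≤ m−1, w^{(m)} = (η/2)u₀, and w^{(k)} = 0 for k > m. Consider ℓ₄(w) = max(δ₂, max_{u∈U, 1≤k<T} ((3/8)⟨u, w^{(k)}⟩ − (1/2)⟨u, w^{(k+1)}⟩)). Then the maximum is uniquely attained at (u, k) = (u₀, m) with value 3η/16, exceeding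 every other candidate term (and δ₂) by more than η/64; consequently ℓ₄ is differentiable at w with ∇ℓ₄(w) having block m equal to (3/8)u₀, block m+1 equal to −(1/2)u₀, and all other blocks zero. -/
open RealInnerProductSpace

set_option maxHeartbeats 1000000

private lemma real_biSup_eq {α ι : Type*} [Nonempty ι] (U : Finset α) (f : α → ι → ℝ)
    (u₀ : α) (hu₀ : u₀ ∈ U) (i₀ : ι)
    (hle : ∀ u ∈ U, ∀ i, f u i ≤ f u₀ i₀) (h0 : 0 ≤ f u₀ i₀) :
    (⨆ u ∈ U, ⨆ i, f u i) = f u₀ i₀ := by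
  classical
  apply le_antisymm
  · apply Real.iSup_le _ h0
    intro u
    by_cases hu : u ∈ U
    · rw [ciSup_pos hu]
      exact Real.iSup_le (fun i => hle u hu i) h0
    · rw [ciSup_neg hu, Real.sSup_empty]
      exact h0
  · have hinner : f u₀ i₀ ≤ ⨆ i, f u₀ i :=
      le_ciSup ⟨f u₀ i₀, by rintro x ⟨i, rfl⟩; exact hle u₀ hu₀ i⟩ i₀
    refine hinner.trans ?_
    rw [show (⨆ i, f u₀ i) = ⨆ _ : u₀ ∈ U, ⨆ i, f u₀ i from
      (ciSup_pos (f := fun _ : u₀ ∈ U => ⨆ i, f u₀ i) hu₀).symm]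
    refine le_ciSup (f := fun u => ⨆ _ : u ∈ U, ⨆ i, f u i) ⟨max 0 (f u₀ i₀), ?_⟩ u₀
    rintro x ⟨u, rfl⟩
    show (⨆ _ : u ∈ U, ⨆ i, f u i) ≤ max 0 (f u₀ i₀)
    by_cases hu : u ∈ U
    · rw [ciSup_pos hu]
      exact (Real.iSup_le (fun i => hle u hu i) h0).trans (le_max_right _ _)
    · rw [ciSup_neg hu, Real.sSup_empty]
      exact le_max_left _ _

private lemma pilp_coord_norm_le {n : ℕ} {E : Type*} [SeminormedAddCommGroup E]
    (x : PiLp 2 (fun _ : Fin n => E)) (j : Fin n) : ‖x j‖ ≤ ‖x‖ := by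
  have h1 : ‖x j‖ ^ 2 ≤ ∑ i, ‖x i‖ ^ 2 :=
    Finset.single_le_sum (f := fun i => ‖x i‖ ^ 2) (fun i _ => sq_nonneg _) (Finset.mem_univ j)
  have h2 := PiLp.norm_sq_eq_of_L2 (fun _ : Fin n => E) x
  nlinarith [norm_nonneg x, norm_nonneg (x j)]

private lemma hasGradientAt_inner_left' {F : Type*} [NormedAddCommGroup F]
    [InnerProductSpace ℝ F] [CompleteSpace F] (p x : F) :
    HasGradientAt (fun v => ⟪p, v⟫) p x := by
  have h : (fun v : F => ⟪p, v⟫) = ⇑((InnerProductSpace.toDual ℝ F) p) := by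
    funext v; simp [InnerProductSpace.toDual_apply_apply]
  rw [hasGradientAt_iff_hasFDerivAt, h]
  exact ((InnerProductSpace.toDual ℝ F) p).hasFDerivAt

/-- Unique maximizer and gradient of the round-robin term
`ℓ₄(w) = max(δ₂, max_{u ∈ U, 1 ≤ k < T} ((3/8)⟨u, w⁽ᵏ⁾⟩ - (1/2)⟨u, w⁽ᵏ⁺¹⁾⟩))` at a point
`w` whose blocks are `w⁽¹⁾ = cηu₀` with `-3/8 ≤ c ≤ 0`, `w⁽ᵏ⁾ = (η/8)u₀` for
`2 ≤ k ≤ m-1`, `w⁽ᵐ⁾ = (η/2)u₀`, and `w⁽ᵏ⁾ = 0` for `k > m`: the maximum is uniquely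
attained at `(u₀, m)` with value `3η/16`, exceeding every other candidate (and `δ₂`) by
more than `η/64`; hence `ℓ₄` is differentiable at `w` with gradient `(3/8)u₀` in block
`m`, `-(1/2)u₀` in block `m+1`, and `0` elsewhere.  (Blocks are indexed by `Fin (T+1)`,
block `0` being unused.) -/
theorem ell4_unique_max_gradient (d' T m : ℕ) (hm3 : 3 ≤ m) (hmT : m < T)
    (η δ₂ c : ℝ) (hη : 0 < η) (hδ₂pos : 0 < δ₂) (hδ₂ : δ₂ < 3 * η / 16 - η / 64)
    (hc : -(3 / 8) ≤ c) (hc' : c ≤ 0)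
    (U : Finset (EuclideanSpace ℝ (Fin d')))
    (hunit : ∀ u ∈ U, ‖u‖ = 1)
    (horth : ∀ u ∈ U, ∀ v ∈ U, u ≠ v → |⟪u, v⟫| ≤ 1 / 8)
    (u₀ : EuclideanSpace ℝ (Fin d')) (hu₀ : u₀ ∈ U)
    (w : PiLp 2 (fun _ : Fin (T + 1) => EuclideanSpace ℝ (Fin d')))
    (hw1 : ∀ k : Fin (T + 1), k.val = 1 → w k = (c * η) • u₀)
    (hwmid : ∀ k : Fin (T + 1), 2 ≤ k.val → k.val ≤ m - 1 → w k = (η / 8) • u₀)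
    (hwm : ∀ k : Fin (T + 1), k.val = m → w k = (η / 2) • u₀)
    (hwtop : ∀ k : Fin (T + 1), m < k.val → w k = 0)
    (ℓ₄ : PiLp 2 (fun _ : Fin (T + 1) => EuclideanSpace ℝ (Fin d')) → ℝ)
    (hℓ₄ : ∀ v, ℓ₄ v = max δ₂ (⨆ u ∈ U, ⨆ k : {k : ℕ // 1 ≤ k ∧ k < T},
      (3 / 8) * ⟪u, v ⟨k.1, by omega⟩⟫ - (1 / 2) * ⟪u, v ⟨k.1 + 1, by omega⟩⟫)) :
    ((3 / 8) * ⟪u₀, w ⟨m, by omega⟩⟫ - (1 / 2) * ⟪u₀, w ⟨m + 1, by omega⟩⟫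
        = 3 * η / 16) ∧
    (∀ u ∈ U, ∀ k : {k : ℕ // 1 ≤ k ∧ k < T}, u ≠ u₀ ∨ k.1 ≠ m →
      ((3 / 8) * ⟪u, w ⟨k.1, by omega⟩⟫ - (1 / 2) * ⟪u, w ⟨k.1 + 1, by omega⟩⟫)
          + η / 64
        < (3 / 8) * ⟪u₀, w ⟨m, by omega⟩⟫ - (1 / 2) * ⟪u₀, w ⟨m + 1, by omega⟩⟫) ∧
    (δ₂ + η / 64
        < (3 / 8) * ⟪u₀, w ⟨m, by omega⟩⟫ - (1 / 2) * ⟪u₀, w ⟨m + 1, by omega⟩⟫) ∧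
    DifferentiableAt ℝ ℓ₄ w ∧
    gradient ℓ₄ w =
      (WithLp.equiv 2 (∀ _ : Fin (T + 1), EuclideanSpace ℝ (Fin d'))).symm
        (fun k : Fin (T + 1) =>
          if k.val = m then (3 / 8 : ℝ) • u₀
          else if k.val = m + 1 then (-(1 / 2) : ℝ) • u₀
          else 0) := by
  have hnu₀ : ‖u₀‖ = 1 := hunit u₀ hu₀
  have hiu₀ : ⟪u₀, u₀⟫ = 1 := by
    rw [real_inner_self_eq_norm_mul_norm, hnu₀]; norm_num
  have hwmv : w ⟨m, by omega⟩ = (η / 2) • u₀ := hwm ⟨m, by omega⟩ rfl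
  have hwm1v : w ⟨m + 1, by omega⟩ = 0 := hwtop ⟨m + 1, by omega⟩ (by show m < m + 1; omega)
  have hval : (3 / 8) * ⟪u₀, w ⟨m, by omega⟩⟫ - (1 / 2) * ⟪u₀, w ⟨m + 1, by omega⟩⟫
      = 3 * η / 16 := by
    rw [hwmv, hwm1v, real_inner_smul_right, hiu₀, inner_zero_right]
    ring
  -- structure of each candidate term at w
  have hterm : ∀ k : {k : ℕ // 1 ≤ k ∧ k < T}, ∃ q : ℝ,
      (∀ u : EuclideanSpace ℝ (Fin d'),
        (3 / 8) * ⟪u, w ⟨k.1, by omega⟩⟫ - (1 / 2) * ⟪u, w ⟨k.1 + 1, by omega⟩⟫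
          = ⟪u, u₀⟫ * q)
      ∧ |q| ≤ 13 * η / 64 ∧ (k.1 ≠ m → q ≤ 0) ∧ (k.1 = m → q = 3 * η / 16) := by
    rintro ⟨k, hk1, hkT⟩
    have key : ∀ r s : ℝ, w (⟨k, by omega⟩ : Fin (T + 1)) = r • u₀ →
        w (⟨k + 1, by omega⟩ : Fin (T + 1)) = s • u₀ →
        ∀ u : EuclideanSpace ℝ (Fin d'),
          (3 / 8) * ⟪u, w ⟨k, by omega⟩⟫ - (1 / 2) * ⟪u, w ⟨k + 1, by omega⟩⟫
            = ⟪u, u₀⟫ * ((3 / 8) * r - (1 / 2) * s) := by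
      intro r s hr hs u
      rw [hr, hs, real_inner_smul_right, real_inner_smul_right]; ring
    have hcη : -(3 / 8) * η ≤ c * η := mul_le_mul_of_nonneg_right hc hη.le
    have hcη' : c * η ≤ 0 := mul_nonpos_of_nonpos_of_nonneg hc' hη.le
    rcases (by omega : k = 1 ∨ (2 ≤ k ∧ k ≤ m - 2) ∨ k = m - 1 ∨ k = m ∨ m < k)
      with h | h | h | h | h
    · refine ⟨(3 / 8) * (c * η) - (1 / 2) * (η / 8),
        key _ _ (hw1 _ h)
          (hwmid _ (by show 2 ≤ k + 1; omega) (by show k + 1 ≤ m - 1; omega)),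
        ?_, fun _ => by linarith, fun hm' => absurd hm' (by show ¬ k = m; omega)⟩
      rw [abs_le]; constructor <;> linarith
    · refine ⟨(3 / 8) * (η / 8) - (1 / 2) * (η / 8),
        key _ _ (hwmid _ (by show 2 ≤ k; omega) (by show k ≤ m - 1; omega))
          (hwmid _ (by show 2 ≤ k + 1; omega) (by show k + 1 ≤ m - 1; omega)),
        ?_, fun _ => by linarith, fun hm' => absurd hm' (by show ¬ k = m; omega)⟩
      rw [abs_le]; constructor <;> linarith
    · refine ⟨(3 / 8) * (η / 8) - (1 / 2) * (η / 2),
        key _ _ (hwmid _ (by show 2 ≤ k; omega) (by show k ≤ m - 1; omega))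
          (hwm _ (by show k + 1 = m; omega)),
        ?_, fun _ => by linarith, fun hm' => absurd hm' (by show ¬ k = m; omega)⟩
      rw [abs_le]; constructor <;> linarith
    · refine ⟨(3 / 8) * (η / 2) - (1 / 2) * 0,
        key _ _ (hwm _ h) (by rw [hwtop _ (by show m < k + 1; omega)]; rw [zero_smul]),
        ?_, fun hne => absurd h hne, fun _ => by ring⟩
      rw [abs_le]; constructor <;> linarith
    · refine ⟨(3 / 8) * 0 - (1 / 2) * 0,
        key _ _ (by rw [hwtop _ (by show m < k; omega)]; rw [zero_smul])
          (by rw [hwtop _ (by show m < k + 1; omega)]; rw [zero_smul]),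
        ?_, fun _ => by linarith, fun hm' => absurd hm' (by show ¬ k = m; omega)⟩
      rw [abs_le]; constructor <;> linarith
  -- uniform bound on all other terms
  have hmain : ∀ u ∈ U, ∀ k : {k : ℕ // 1 ≤ k ∧ k < T}, u ≠ u₀ ∨ k.1 ≠ m →
      (3 / 8) * ⟪u, w ⟨k.1, by omega⟩⟫ - (1 / 2) * ⟪u, w ⟨k.1 + 1, by omega⟩⟫
        ≤ 3 * η / 16 - η / 32 := by
    intro u hu k hne
    obtain ⟨q, hq, habs, hnp, -⟩ := hterm k
    rw [hq u]
    by_cases huu : u = u₀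
    · subst huu
      rw [hiu₀, one_mul]
      have hk : k.1 ≠ m := hne.resolve_left (fun h => h rfl)
      have := hnp hk
      linarith
    · have ha := horth u hu u₀ hu₀ huu
      have h1 : ⟪u, u₀⟫ * q ≤ |⟪u, u₀⟫| * |q| := by
        rw [← abs_mul]; exact le_abs_self _
      have h2 : |⟪u, u₀⟫| * |q| ≤ (1 / 8) * (13 * η / 64) :=
        mul_le_mul ha habs (abs_nonneg _) (by norm_num)
      linarith
  refine ⟨hval, ?_, ?_, ?_⟩
  · intro u hu k hne
    rw [hval]
    have := hmain u hu k hne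
    linarith
  · rw [hval]; linarith
  -- the gradient candidate
  obtain ⟨p, hpdef⟩ : ∃ p : PiLp 2 (fun _ : Fin (T + 1) => EuclideanSpace ℝ (Fin d')),
      p = (WithLp.equiv 2 (∀ _ : Fin (T + 1), EuclideanSpace ℝ (Fin d'))).symm
        (fun k : Fin (T + 1) =>
          if k.val = m then (3 / 8 : ℝ) • u₀
          else if k.val = m + 1 then (-(1 / 2) : ℝ) • u₀
          else 0) := ⟨_, rfl⟩
  have hpapp : ∀ j : Fin (T + 1), p j =
      (if j.val = m then (3 / 8 : ℝ) • u₀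
        else if j.val = m + 1 then (-(1 / 2) : ℝ) • u₀ else 0) := by
    intro j; rw [hpdef]; rfl
  have hp1 : p ⟨m, by omega⟩ = (3 / 8 : ℝ) • u₀ := by
    rw [hpapp]; exact if_pos rfl
  have hp2 : p ⟨m + 1, by omega⟩ = (-(1 / 2) : ℝ) • u₀ := by
    rw [hpapp, if_neg (by show ¬ m + 1 = m; omega)]; exact if_pos rfl
  have hpzero : ∀ x : Fin (T + 1), x.val ≠ m → x.val ≠ m + 1 → p x = 0 := by
    intro x h1 h2; rw [hpapp, if_neg h1, if_neg h2]
  have hg : ∀ v : PiLp 2 (fun _ : Fin (T + 1) => EuclideanSpace ℝ (Fin d')),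
      ⟪p, v⟫ = (3 / 8) * ⟪u₀, v ⟨m, by omega⟩⟫ - (1 / 2) * ⟪u₀, v ⟨m + 1, by omega⟩⟫ := by
    intro v
    rw [PiLp.inner_apply]
    rw [← Finset.sum_subset
      (Finset.subset_univ ({⟨m, by omega⟩, ⟨m + 1, by omega⟩} : Finset (Fin (T + 1))))
      (by
        intro x _ hx
        simp only [Finset.mem_insert, Finset.mem_singleton] at hx
        push_neg at hx
        have hx1 : x.val ≠ m := fun h => hx.1 (Fin.ext h)
        have hx2 : x.val ≠ m + 1 := fun h => hx.2 (Fin.ext h)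
        rw [hpzero x hx1 hx2, inner_zero_left])]
    rw [Finset.sum_insert (by
        simp only [Finset.mem_singleton]
        intro hEq
        have := Fin.mk.injEq .. ▸ hEq
        exact absurd (Fin.val_eq_of_eq hEq) (by show ¬ m = m + 1; omega)),
      Finset.sum_singleton, hp1, hp2, real_inner_smul_left, real_inner_smul_left]
    ring
  -- local identification of ℓ₄ with the affine function
  haveI : Nonempty {k : ℕ // 1 ≤ k ∧ k < T} := ⟨⟨m, by omega, hmT⟩⟩
  have hgv : ∀ v, ‖v - w‖ < η / 256 → ℓ₄ v = ⟪p, v⟫ := by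
    intro v hv
    have hpert : ∀ u ∈ U, ∀ j : Fin (T + 1), |⟪u, v j⟫ - ⟪u, w j⟫| < η / 256 := by
      intro u hu j
      have h1 : ⟪u, v j⟫ - ⟪u, w j⟫ = ⟪u, (v - w) j⟫ := by
        rw [PiLp.sub_apply, inner_sub_right]
      rw [h1]
      calc |⟪u, (v - w) j⟫| ≤ ‖u‖ * ‖(v - w) j‖ := abs_real_inner_le_norm _ _
        _ = ‖(v - w) j‖ := by rw [hunit u hu, one_mul]
        _ ≤ ‖v - w‖ := pilp_coord_norm_le _ _
        _ < η / 256 := hv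
    have hvm : 3 * η / 16 - η / 256
        < (3 / 8) * ⟪u₀, v ⟨m, by omega⟩⟫ - (1 / 2) * ⟪u₀, v ⟨m + 1, by omega⟩⟫ := by
      have h1 := hpert u₀ hu₀ ⟨m, by omega⟩
      have h2 := hpert u₀ hu₀ ⟨m + 1, by omega⟩
      rw [abs_lt] at h1 h2
      have := hval
      linarith [h1.1, h1.2, h2.1, h2.2]
    have hup : ∀ u ∈ U, ∀ k : {k : ℕ // 1 ≤ k ∧ k < T},
        (3 / 8) * ⟪u, v ⟨k.1, by omega⟩⟫ - (1 / 2) * ⟪u, v ⟨k.1 + 1, by omega⟩⟫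
          ≤ (3 / 8) * ⟪u₀, v ⟨m, by omega⟩⟫ - (1 / 2) * ⟪u₀, v ⟨m + 1, by omega⟩⟫ := by
      intro u hu k
      by_cases hne : u = u₀ ∧ k.1 = m
      · obtain ⟨rfl, hkm⟩ := hne
        have e1 : (⟨k.1, by omega⟩ : Fin (T + 1)) = ⟨m, by omega⟩ := Fin.ext hkm
        have e2 : (⟨k.1 + 1, by omega⟩ : Fin (T + 1)) = ⟨m + 1, by omega⟩ :=
          Fin.ext (by show k.1 + 1 = m + 1; omega)
        rw [e1, e2]
      · have hne' : u ≠ u₀ ∨ k.1 ≠ m := by tauto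
        have hw := hmain u hu k hne'
        have p1 := hpert u hu ⟨k.1, by omega⟩
        have p2 := hpert u hu ⟨k.1 + 1, by omega⟩
        rw [abs_lt] at p1 p2
        linarith [p1.1, p1.2, p2.1, p2.2, hvm]
    have h0 : (0 : ℝ) ≤ (3 / 8) * ⟪u₀, v ⟨m, by omega⟩⟫
        - (1 / 2) * ⟪u₀, v ⟨m + 1, by omega⟩⟫ := by linarith [hvm]
    have hsup : (⨆ u ∈ U, ⨆ k : {k : ℕ // 1 ≤ k ∧ k < T},
        (3 / 8) * ⟪u, v ⟨k.1, by omega⟩⟫ - (1 / 2) * ⟪u, v ⟨k.1 + 1, by omega⟩⟫)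
        = (3 / 8) * ⟪u₀, v ⟨m, by omega⟩⟫ - (1 / 2) * ⟪u₀, v ⟨m + 1, by omega⟩⟫ :=
      real_biSup_eq U _ u₀ hu₀ (⟨m, by omega, hmT⟩ : {k : ℕ // 1 ≤ k ∧ k < T}) hup h0
    rw [hℓ₄ v, hg v, hsup]
    exact max_eq_right (by linarith [hvm])
  have heq : ℓ₄ =ᶠ[nhds w] fun v => ⟪p, v⟫ := by
    filter_upwards [Metric.ball_mem_nhds w (by positivity : (0 : ℝ) < η / 256)] with v hv
    exact hgv v (by rwa [Metric.mem_ball, dist_eq_norm] at hv)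
  have hgr : HasGradientAt (fun v => ⟪p, v⟫) p w := hasGradientAt_inner_left' p w
  refine ⟨hgr.hasFDerivAt.differentiableAt.congr_of_eventuallyEq heq, ?_⟩
  rw [heq.gradient_eq, hgr.gradient]
  exact hpdef
end
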